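/- arXiv:2001.10421 — 4 statements merged into one kernel-verified Lean document; each statement's English description precedes it below -/
import Mathlib

section
/- If f_α is a smoothing family of functions for the shortest-path distance δ_Γ of a digraph Γ (i.e. f_α(x) → 0 and f_α(x)/f_α(1) → 0 as α → ∞ for all x ≥ 2), then the nonlocal transition matrix P_α converges entrywise, as α → ∞, to the standard random-walk transition matrix P = D_out^{-1} A of Γ. -/
open Finset Filter
open scoped ENNReal Topology

/-- Adjacency matrix (over `ℕ`) of a digraph given by `E`. -/
def adjMat {n : ℕ} (E : Fin n → Fin n → Bool) : Matrix (Fin n) (Fin n) ℕ :=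
  Matrix.of fun i j => if E i j then 1 else 0

/-- Shortest-path distance of the digraph `E`: the least length of a walk from `i` to `j`
(`∞` if there is no such walk).  A walk of length `m` exists iff `(A^m) i j ≠ 0`. -/
noncomputable def spDist {n : ℕ} (E : Fin n → Fin n → Bool) (i j : Fin n) : ℝ≥0∞ :=
  sInf {x : ℝ≥0∞ | ∃ m : ℕ, x = (m : ℝ≥0∞) ∧ (adjMat E ^ m) i j ≠ 0}

lemma spDist_le_one {n : ℕ} (E : Fin n → Fin n → Bool) {i j : Fin n} (h : E i j = true) :
    spDist E i j ≤ 1 := by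
  apply sInf_le
  exact ⟨1, by norm_cast, by simp [adjMat, h]⟩

lemma spDist_eq_one {n : ℕ} (E : Fin n → Fin n → Bool) {i j : Fin n} (hij : j ≠ i)
    (h : E i j = true) : spDist E i j = 1 := by
  refine le_antisymm (spDist_le_one E h) (le_sInf ?_)
  rintro x ⟨m, rfl, hm⟩
  rcases Nat.eq_zero_or_pos m with h0 | h1
  · subst h0
    simp [Matrix.one_apply_ne (Ne.symm hij)] at hm
  · exact_mod_cast h1

lemma two_le_spDist {n : ℕ} (E : Fin n → Fin n → Bool) {i j : Fin n} (hij : j ≠ i)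
    (h : E i j = false) : 2 ≤ spDist E i j := by
  refine le_sInf ?_
  rintro x ⟨m, rfl, hm⟩
  have h2 : 2 ≤ m := by
    by_contra hc
    push_neg at hc
    interval_cases m
    · simp [Matrix.one_apply_ne (Ne.symm hij)] at hm
    · simp [adjMat, h] at hm
  exact_mod_cast h2

lemma spDist_eq_top_of_deg_zero {n : ℕ} (E : Fin n → Fin n → Bool) {i j : Fin n}
    (hij : j ≠ i) (h : ∀ k, E i k = false) : spDist E i j = ⊤ := by
  apply sInf_eq_top.mpr
  rintro x ⟨m, rfl, hm⟩
  exfalso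
  cases m with
  | zero => simp [Matrix.one_apply_ne (Ne.symm hij)] at hm
  | succ m =>
    apply hm
    rw [pow_succ', Matrix.mul_apply]
    simp [adjMat, h]

/-- If `f_α` is a smoothing family for the shortest-path distance `δ_Γ` of a
loop-less digraph `Γ` (i.e. `f_α(x) → 0` and `f_α(x)/f_α(1) → 0` as `α → ∞` for all `x ≥ 2`),
then the nonlocal transition matrix `P_α` converges entrywise, as `α → ∞`, to the standard
random-walk transition matrix `P = D_out⁻¹ A`. -/
theorem nonlocal_transition_tendsto_pagerank
    {n : ℕ} (E : Fin n → Fin n → Bool) (hloop : ∀ i, E i i = false)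
    (f : ℝ → ℝ≥0∞ → ℝ)
    (hfpos : ∀ α x, x ≠ ⊤ → 0 < f α x)
    (hftop : ∀ α, f α ⊤ = 0)
    (hfanti : ∀ α, Antitone (f α))
    (hsmooth₁ : ∀ x : ℝ≥0∞, 2 ≤ x → Tendsto (fun α => f α x) atTop (𝓝 0))
    (hsmooth₂ : ∀ x : ℝ≥0∞, 2 ≤ x → Tendsto (fun α => f α x / f α 1) atTop (𝓝 0))
    (P : Matrix (Fin n) (Fin n) ℝ)
    (hPdef : ∀ i j, P i j =
      if E i j then 1 / ((Finset.univ.filter fun k => E i k).card : ℝ) else 0)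
    (Pa : ℝ → Matrix (Fin n) (Fin n) ℝ)
    (hPadef : ∀ α i j, Pa α i j =
      if j ≠ i ∧ spDist E i j ≠ ⊤
      then f α (spDist E i j) / ∑ k ∈ Finset.univ.erase i, f α (spDist E i k)
      else 0) :
    ∀ i j, Tendsto (fun α => Pa α i j) atTop (𝓝 (P i j)) := by
  intro i j
  by_cases hij : j = i
  · subst hij
    have h2 : P j j = 0 := by rw [hPdef]; simp [hloop j]
    rw [h2]
    refine Tendsto.congr (fun α => ?_) tendsto_const_nhds
    rw [hPadef]; simp
  · by_cases htop : spDist E i j = ⊤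
    · have hE : E i j = false := by
        by_contra hc
        rw [Bool.not_eq_false] at hc
        exact (lt_of_le_of_lt (spDist_le_one E hc) (by norm_num)).ne htop
      have h2 : P i j = 0 := by rw [hPdef]; simp [hE]
      rw [h2]
      refine Tendsto.congr (fun α => ?_) tendsto_const_nhds
      rw [hPadef]
      simp [htop]
    · -- main case
      set d : ℕ := (Finset.univ.filter fun k => E i k).card with hd_def
      set M : Finset (Fin n) := (Finset.univ.erase i).filter (fun k => ¬ E i k = true)
        with hM_def
      have hdeg : ∃ k, E i k = true := by
        by_contra hc
        push_neg at hc
        exact htop (spDist_eq_top_of_deg_zero E hij (fun k => by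
          simpa using hc k))
      have hd_pos : 0 < d := by
        obtain ⟨k, hk⟩ := hdeg
        exact Finset.card_pos.mpr ⟨k, by simp [hk]⟩
      have hd' : ((d : ℝ)) ≠ 0 := by positivity
      have hM2 : ∀ k ∈ M, 2 ≤ spDist E i k := by
        intro k hk
        rw [hM_def, Finset.mem_filter, Finset.mem_erase] at hk
        exact two_le_spDist E hk.1.1 (by simpa using hk.2)
      -- tendsto of the sum of ratios
      have hT : Tendsto (fun α => ∑ k ∈ M, f α (spDist E i k) / f α 1)
          atTop (𝓝 0) := by
        have := tendsto_finset_sum M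
          (fun k hk => hsmooth₂ (spDist E i k) (hM2 k hk))
        simpa using this
      have hden : Tendsto (fun α => (d : ℝ) + ∑ k ∈ M, f α (spDist E i k) / f α 1)
          atTop (𝓝 (d : ℝ)) := by
        simpa using tendsto_const_nhds.add hT
      -- splitting the sum
      have hNfilter : (Finset.univ.erase i).filter (fun k => E i k = true)
          = Finset.univ.filter fun k => E i k := by
        ext k
        simp only [Finset.mem_filter, Finset.mem_erase, Finset.mem_univ, true_and,
          and_true]
        constructor
        · rintro ⟨_, h⟩; exact h
        · intro h
          refine ⟨fun hk => ?_, h⟩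
          rw [hk, hloop i] at h
          exact Bool.false_ne_true h
      have hsplit : ∀ α, ∑ k ∈ Finset.univ.erase i, f α (spDist E i k)
          = (d : ℝ) * f α 1 + ∑ k ∈ M, f α (spDist E i k) := by
        intro α
        rw [← Finset.sum_filter_add_sum_filter_not (Finset.univ.erase i)
          (fun k => E i k = true)]
        congr 1
        calc ∑ k ∈ (Finset.univ.erase i).filter (fun k => E i k = true),
              f α (spDist E i k)
            = ∑ k ∈ (Finset.univ.erase i).filter (fun k => E i k = true), f α 1 := by
              refine Finset.sum_congr rfl (fun k hk => ?_)
              rw [Finset.mem_filter, Finset.mem_erase] at hk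
              rw [spDist_eq_one E hk.1.1 hk.2]
          _ = (d : ℝ) * f α 1 := by
              rw [Finset.sum_const, hNfilter, nsmul_eq_mul]
      -- pointwise rewriting of Pa
      have hkey : ∀ α, Pa α i j =
          (f α (spDist E i j) / f α 1) /
            ((d : ℝ) + ∑ k ∈ M, f α (spDist E i k) / f α 1) := by
        intro α
        have hb : (0 : ℝ) < f α 1 := hfpos α 1 (by simp)
        rw [hPadef α i j, if_pos ⟨hij, htop⟩, hsplit α, ← Finset.sum_div]
        rw [show (d : ℝ) * f α 1 + ∑ k ∈ M, f α (spDist E i k)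
            = f α 1 * ((d : ℝ) + (∑ k ∈ M, f α (spDist E i k)) / f α 1) by
          field_simp]
        rw [← div_div]
      by_cases hE : E i j = true
      · have hdist : spDist E i j = 1 := spDist_eq_one E hij hE
        have hnum : Tendsto (fun α => f α (spDist E i j) / f α 1) atTop (𝓝 1) := by
          rw [hdist]
          refine Tendsto.congr (fun α => ?_) tendsto_const_nhds
          exact (div_self (hfpos α 1 (by simp)).ne').symm
        have hP : P i j = 1 / (d : ℝ) := by rw [hPdef]; simp [hE, hd_def]
        rw [hP]
        exact Tendsto.congr (fun α => (hkey α).symm) (hnum.div hden hd')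
      · have hE' : E i j = false := by simpa using hE
        have hnum : Tendsto (fun α => f α (spDist E i j) / f α 1) atTop (𝓝 0) :=
          hsmooth₂ _ (two_le_spDist E hij hE')
        have hP : P i j = 0 := by rw [hPdef]; simp [hE']
        rw [hP]
        have h0 := hnum.div hden hd'
        rw [zero_div] at h0
        exact Tendsto.congr (fun α => (hkey α).symm) h0
end

section
/- If λ is an eigenvalue of a row-stochastic matrix G with λ ≠ 1, then |λ| ≤ τ₁(G), where τ₁(G) = (1/2)·max_{i,j} Σ_k |G_{ik} − G_{jk}| is the ergodicity coefficient. -/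
open Finset

lemma key_bound {n : ℕ} (a : Fin n → ℝ) (ha : ∑ k, a k = 0) (v : Fin n → ℂ) (M : ℝ)
    (hM : ∀ k l, ‖v k - v l‖ ≤ M) :
    ‖∑ k, (a k : ℂ) * v k‖ ≤ (1 / 2) * (∑ k, |a k|) * M := by
  set ap : Fin n → ℝ := fun k => max (a k) 0 with hap
  set am : Fin n → ℝ := fun k => max (-a k) 0 with ham
  have hps : ∀ k, 0 ≤ ap k := fun k => le_max_right _ _
  have hms : ∀ k, 0 ≤ am k := fun k => le_max_right _ _
  have hsub : ∀ k, a k = ap k - am k := by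
    intro k; simp only [hap, ham]; rcases le_total (a k) 0 with h | h <;>
      [simp [max_eq_right h, max_eq_left (neg_nonneg.mpr h)];
       simp [max_eq_left h, max_eq_right (neg_nonpos.mpr h)]]
  have habs : ∀ k, |a k| = ap k + am k := by
    intro k; simp only [hap, ham]; rcases le_total (a k) 0 with h | h <;>
      [simp [abs_of_nonpos h, max_eq_right h, max_eq_left (neg_nonneg.mpr h)];
       simp [abs_of_nonneg h, max_eq_left h, max_eq_right (neg_nonpos.mpr h)]]
  set s : ℝ := ∑ k, ap k with hs
  have hsm : ∑ k, am k = s := by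
    have := ha
    simp_rw [hsub, Finset.sum_sub_distrib] at this
    linarith
  have habs_sum : ∑ k, |a k| = 2 * s := by
    simp_rw [habs, Finset.sum_add_distrib, hsm]; ring
  rcases eq_or_lt_of_le (Finset.sum_nonneg (fun k _ => hps k) : (0:ℝ) ≤ s) with h0 | hpos
  · -- s = 0 : all a k = 0
    have hs0 : s = 0 := h0.symm
    have hap0 : ∀ k, ap k = 0 := by
      intro k
      have h1 := Finset.single_le_sum (fun k _ => hps k) (Finset.mem_univ k)
      have : ap k ≤ s := h1
      exact le_antisymm (by linarith) (hps k)
    have ham0 : ∀ k, am k = 0 := by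
      intro k
      have h1 := Finset.single_le_sum (fun k _ => hms k) (Finset.mem_univ k)
      have : am k ≤ ∑ k, am k := h1
      rw [hsm] at this
      exact le_antisymm (by linarith) (hms k)
    have hz : ∀ k, a k = 0 := fun k => by rw [hsub k, hap0 k, ham0 k]; ring
    simp [hz, habs_sum, hs0]
  · -- main case
    have hkey : (s : ℂ) * ∑ k, (a k : ℂ) * v k
        = ∑ k, ∑ l, ((ap k : ℂ) * (am l : ℂ)) * (v k - v l) := by
      have e1 : ∑ k, ∑ l, ((ap k : ℂ) * (am l : ℂ)) * (v k - v l)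
          = (∑ k, (ap k : ℂ) * v k) * (∑ l, (am l : ℂ))
            - (∑ k, (ap k : ℂ)) * (∑ l, (am l : ℂ) * v l) := by
        rw [Finset.sum_mul_sum, Finset.sum_mul_sum, ← Finset.sum_sub_distrib]
        refine Finset.sum_congr rfl fun k _ => ?_
        rw [← Finset.sum_sub_distrib]
        exact Finset.sum_congr rfl fun l _ => by ring
      have hsp : (∑ k, (ap k : ℂ)) = (s : ℂ) := by rw [hs]; push_cast; rfl
      have hsmc : (∑ l, (am l : ℂ)) = (s : ℂ) := by rw [← hsm]; push_cast; rfl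
      rw [e1, hsp, hsmc, mul_comm (∑ k, (ap k : ℂ) * v k) ((s:ℂ)), ← mul_sub,
        ← Finset.sum_sub_distrib]
      congr 1
      refine Finset.sum_congr rfl fun k _ => ?_
      rw [← sub_mul]
      congr 1
      rw [hsub k]; push_cast; ring
    have hbound : ‖(s : ℂ) * ∑ k, (a k : ℂ) * v k‖ ≤ s * s * M := by
      rw [hkey]
      calc ‖∑ k, ∑ l, ((ap k : ℂ) * (am l : ℂ)) * (v k - v l)‖
          ≤ ∑ k, ∑ l, ‖((ap k : ℂ) * (am l : ℂ)) * (v k - v l)‖ := by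
            refine le_trans (norm_sum_le _ _) ?_
            exact Finset.sum_le_sum fun k _ => norm_sum_le _ _
        _ ≤ ∑ k, ∑ l, ap k * am l * M := by
            refine Finset.sum_le_sum fun k _ => Finset.sum_le_sum fun l _ => ?_
            rw [norm_mul, norm_mul, Complex.norm_of_nonneg (hps k), Complex.norm_of_nonneg (hms l)]
            exact mul_le_mul_of_nonneg_left (hM k l) (mul_nonneg (hps k) (hms l))
        _ = s * s * M := by
            simp_rw [← Finset.sum_mul, ← Finset.mul_sum]
            rw [hsm, ← Finset.sum_mul, ← hs]
    rw [norm_mul, Complex.norm_of_nonneg hpos.le] at hbound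
    have h2 : s * ‖∑ k, (a k : ℂ) * v k‖ ≤ s * (s * M) := by linarith
    have := le_of_mul_le_mul_left h2 hpos
    rw [habs_sum]
    linarith

/-- If `λ ≠ 1` is a (complex) eigenvalue of a row-stochastic matrix `G`,
then `|λ| ≤ τ₁(G) = (1/2)·max_{i,j} Σ_k |G_{ik} − G_{jk}|`. -/
theorem eigenvalue_le_ergodicity_coefficient
    {n : ℕ} (G : Matrix (Fin n) (Fin n) ℝ)
    (hG0 : ∀ i j, 0 ≤ G i j) (hG1 : ∀ i, ∑ j, G i j = 1)
    (lam : ℂ) (hlam : lam ≠ 1)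
    (v : Fin n → ℂ) (hv : v ≠ 0)
    (heig : (G.map (fun x : ℝ => (x : ℂ))).mulVec v = lam • v) :
    ‖lam‖ ≤ (1 / 2) * ⨆ i : Fin n, ⨆ j : Fin n, ∑ k, |G i k - G j k| := by
  -- n is positive
  have hne : Nonempty (Fin n) := by
    rcases Nat.eq_zero_or_pos n with h | h
    · subst h; exact absurd (funext fun k => k.elim0) hv
    · exact ⟨⟨0, h⟩⟩
  -- entrywise eigen equation
  have heq : ∀ i, ∑ k, (G i k : ℂ) * v k = lam * v i := by
    intro i
    have := congrFun heig i
    simpa [Matrix.mulVec, dotProduct, Matrix.map_apply] using this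
  -- pick maximizing pair
  obtain ⟨⟨p, q⟩, -, hmax⟩ := Finset.exists_max_image (Finset.univ : Finset (Fin n × Fin n))
    (fun pr => ‖v pr.1 - v pr.2‖) ⟨(Classical.arbitrary (Fin n),
      Classical.arbitrary (Fin n)), Finset.mem_univ _⟩
  set M : ℝ := ‖v p - v q‖ with hM
  have hMmax : ∀ k l, ‖v k - v l‖ ≤ M := fun k l =>
    hmax (k, l) (Finset.mem_univ _)
  -- M > 0
  have hMpos : 0 < M := by
    rcases lt_or_eq_of_le (norm_nonneg _ : (0:ℝ) ≤ M) with h | h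
    · exact h
    · exfalso
      have hconst : ∀ k l, v k = v l := by
        intro k l
        have hthis := hMmax k l
        have hM0 : M = 0 := h.symm
        have h0 : ‖v k - v l‖ = 0 :=
          le_antisymm (hM0 ▸ hthis) (norm_nonneg _)
        exact sub_eq_zero.mp (norm_eq_zero.mp h0)
      obtain ⟨i, hi⟩ := Function.ne_iff.mp hv
      have h1 := heq i
      have h2 : ∑ k, (G i k : ℂ) * v k = v i := by
        calc ∑ k, (G i k : ℂ) * v k = ∑ k, (G i k : ℂ) * v i := by
              exact Finset.sum_congr rfl fun k _ => by rw [hconst k i]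
          _ = (∑ k, (G i k : ℂ)) * v i := by rw [Finset.sum_mul]
          _ = v i := by
              have : (∑ k, (G i k : ℂ)) = 1 := by
                rw [← Complex.ofReal_sum, hG1 i, Complex.ofReal_one]
              rw [this, one_mul]
      rw [h2] at h1
      have : lam = 1 := by
        have hvi : v i ≠ 0 := by simpa using hi
        have h3 : lam * v i = 1 * v i := by rw [one_mul, ← h1]
        exact mul_right_cancel₀ hvi h3
      exact hlam this
  -- the coefficient vector
  set a : Fin n → ℝ := fun k => G p k - G q k with haa
  have ha : ∑ k, a k = 0 := by
    simp [haa, Finset.sum_sub_distrib, hG1]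
  have hlameq : lam * (v p - v q) = ∑ k, (a k : ℂ) * v k := by
    have h1 := heq p
    have h2 := heq q
    calc lam * (v p - v q) = lam * v p - lam * v q := by ring
      _ = ∑ k, (G p k : ℂ) * v k - ∑ k, (G q k : ℂ) * v k := by rw [h1, h2]
      _ = ∑ k, ((G p k : ℂ) * v k - (G q k : ℂ) * v k) := by
          rw [Finset.sum_sub_distrib]
      _ = ∑ k, (a k : ℂ) * v k := by
          refine Finset.sum_congr rfl fun k _ => ?_
          simp only [haa]; push_cast; ring
  have hkb := key_bound a ha v M hMmax
  rw [← hlameq, norm_mul] at hkb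
  have hlam_le : ‖lam‖ ≤ (1/2) * ∑ k, |a k| := by
    have hM' : ‖v p - v q‖ = M := hM.symm
    rw [hM'] at hkb
    nlinarith [hMpos, norm_nonneg lam, hkb]
  -- bound the sum by the sup
  have hbdd1 : ∀ i : Fin n, BddAbove (Set.range fun j => ∑ k, |G i k - G j k|) :=
    fun i => Set.Finite.bddAbove (Set.finite_range _)
  have hbdd2 : BddAbove (Set.range fun i => ⨆ j, ∑ k, |G i k - G j k|) :=
    Set.Finite.bddAbove (Set.finite_range _)
  have hsup : ∑ k, |a k| ≤ ⨆ i : Fin n, ⨆ j : Fin n, ∑ k, |G i k - G j k| := by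
    calc ∑ k, |a k| = ∑ k, |G p k - G q k| := rfl
      _ ≤ ⨆ j, ∑ k, |G p k - G j k| := le_ciSup (hbdd1 p) q
      _ ≤ ⨆ i, ⨆ j, ∑ k, |G i k - G j k| :=
          le_ciSup (f := fun i => ⨆ j, ∑ k, |G i k - G j k|) hbdd2 p
  calc ‖lam‖ ≤ (1/2) * ∑ k, |a k| := hlam_le
    _ ≤ (1/2) * ⨆ i, ⨆ j, ∑ k, |G i k - G j k| := by linarith
end

section
/- Let G and Ḡ be positive row-stochastic matrices with stationary distributions s and s̄ (row vectors with s^T = s^T G, s^T 1 = 1, and similarly for s̄). If R = G − Ḡ satisfies R·1 = 0, then ‖s − s̄‖₁ ≤ ‖R‖₁ / (1 − τ₁(G)), where τ₁(G) < 1 is the ergodicity coefficient and ‖·‖₁ is the induced matrix/vector 1-norm acting on row vectors. -/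
open Finset

/-- Ergodicity coefficient `τ₁(G) = sup{ ‖δᵀG‖₁ : ‖δ‖₁ = 1, δᵀ1 = 0 }`. -/
noncomputable def tauOneSup {n : ℕ} (G : Matrix (Fin n) (Fin n) ℝ) : ℝ :=
  sSup {x : ℝ | ∃ d : Fin n → ℝ, (∑ i, |d i|) = 1 ∧ (∑ i, d i) = 0 ∧
    x = ∑ j, |∑ i, d i * G i j|}

/-- If `G, Ḡ` are positive row-stochastic matrices with stationary distributions
`s, s̄`, and `R = G − Ḡ` (so `R·1 = 0`), then `τ₁(G) < 1` and
`‖s − s̄‖₁ ≤ ‖R‖₁ / (1 − τ₁(G))`, where `‖R‖₁ = max_i Σ_j |R_{ij}|` is the operator norm for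
left-multiplication by row vectors in the 1-norm. -/
theorem stationary_distribution_perturbation_bound
    {n : ℕ} (hn : 0 < n) (G Gbar : Matrix (Fin n) (Fin n) ℝ)
    (hGpos : ∀ i j, 0 < G i j) (hG1 : ∀ i, ∑ j, G i j = 1)
    (hGbarpos : ∀ i j, 0 < Gbar i j) (hGbar1 : ∀ i, ∑ j, Gbar i j = 1)
    (s sbar : Fin n → ℝ)
    (hs0 : ∀ i, 0 < s i) (hs1 : ∑ i, s i = 1) (hs : ∀ j, ∑ i, s i * G i j = s j)
    (hsbar0 : ∀ i, 0 < sbar i) (hsbar1 : ∑ i, sbar i = 1)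
    (hsbar : ∀ j, ∑ i, sbar i * Gbar i j = sbar j)
    (R : Matrix (Fin n) (Fin n) ℝ) (hR : R = G - Gbar)
    (hRrow : ∀ i, ∑ j, R i j = 0) :
    tauOneSup G < 1 ∧
      ∑ j, |s j - sbar j| ≤ (⨆ i : Fin n, ∑ j, |R i j|) / (1 - tauOneSup G) := by
  classical
  haveI : Nonempty (Fin n) := ⟨⟨0, hn⟩⟩
  set S := {x : ℝ | ∃ d : Fin n → ℝ, (∑ i, |d i|) = 1 ∧ (∑ i, d i) = 0 ∧
    x = ∑ j, |∑ i, d i * G i j|} with hS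
  have i0 : Fin n := ⟨0, hn⟩
  set m : Fin n → ℝ := fun j => univ.inf' univ_nonempty (fun i => G i j) with hm
  have hmle : ∀ i j, m j ≤ G i j := fun i j => inf'_le _ (mem_univ i)
  have hmpos : ∀ j, 0 < m j := fun j => (Finset.lt_inf'_iff _).2 fun i _ => hGpos i j
  set M : ℝ := ∑ j, m j with hM
  have hMpos : 0 < M := Finset.sum_pos (fun j _ => hmpos j) univ_nonempty
  have hMle : M ≤ 1 := by
    calc M ≤ ∑ j, G i0 j := Finset.sum_le_sum fun j _ => hmle i0 j
    _ = 1 := hG1 i0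
  -- key bound: every element of S is ≤ 1 - M
  have hSbound : ∀ x ∈ S, x ≤ 1 - M := by
    rintro x ⟨d, hd1, hd0, rfl⟩
    have key : ∀ j, |∑ i, d i * G i j| ≤ ∑ i, |d i| * (G i j - m j) := by
      intro j
      have : ∑ i, d i * G i j = ∑ i, d i * (G i j - m j) := by
        simp [mul_sub, Finset.sum_sub_distrib, ← Finset.sum_mul, hd0]
      rw [this]
      calc |∑ i, d i * (G i j - m j)| ≤ ∑ i, |d i * (G i j - m j)| :=
            Finset.abs_sum_le_sum_abs _ _
        _ = ∑ i, |d i| * (G i j - m j) := by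
            refine Finset.sum_congr rfl fun i _ => ?_
            rw [abs_mul, abs_of_nonneg (sub_nonneg.2 (hmle i j))]
    calc ∑ j, |∑ i, d i * G i j| ≤ ∑ j, ∑ i, |d i| * (G i j - m j) :=
          Finset.sum_le_sum fun j _ => key j
      _ = ∑ i, |d i| * ((∑ j, G i j) - M) := by
          rw [Finset.sum_comm]
          exact Finset.sum_congr rfl fun i _ => by
            simp [mul_sub, Finset.sum_sub_distrib, ← Finset.mul_sum, hM]
      _ = ∑ i, |d i| * (1 - M) := Finset.sum_congr rfl fun i _ => by rw [hG1 i]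
      _ = 1 - M := by rw [← Finset.sum_mul, hd1, one_mul]
  have hbdd : BddAbove S := ⟨1 - M, fun x hx => hSbound x hx⟩
  have hone : (0:ℝ) ≤ 1 - M := by linarith
  have hτle : tauOneSup G ≤ 1 - M := Real.sSup_le hSbound hone
  have hτlt : tauOneSup G < 1 := lt_of_le_of_lt hτle (by linarith)
  refine ⟨hτlt, ?_⟩
  set d : Fin n → ℝ := fun j => s j - sbar j with hd
  have hd0 : ∑ i, d i = 0 := by
    simp [hd, Finset.sum_sub_distrib, hs1, hsbar1]
  set e : Fin n → ℝ := fun j => ∑ i, sbar i * R i j with he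
  have hid : ∀ j, d j = (∑ i, d i * G i j) + e j := by
    intro j
    have h1 : ∑ i, d i * G i j = (∑ i, s i * G i j) - ∑ i, sbar i * G i j := by
      simp [hd, sub_mul, Finset.sum_sub_distrib]
    have h2 : ∀ i, sbar i * G i j = sbar i * Gbar i j + sbar i * R i j := by
      intro i; rw [hR]; simp [Matrix.sub_apply]; ring
    have : ∑ i, d i * G i j = s j - (sbar j + e j) := by
      rw [h1, hs, Finset.sum_congr rfl (fun i _ => h2 i), Finset.sum_add_distrib, hsbar, he]
    rw [this, hd]; ring
  have hB : ∑ j, |∑ i, d i * G i j| ≤ tauOneSup G * ∑ i, |d i| := by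
    by_cases hc : ∑ i, |d i| = 0
    · have hz : ∀ i, d i = 0 := fun i => abs_eq_zero.1
        ((Finset.sum_eq_zero_iff_of_nonneg (fun i _ => abs_nonneg (d i))).1 hc i (mem_univ i))
      simp [hz, hc]
    · have hcpos : 0 < ∑ i, |d i| :=
        lt_of_le_of_ne (Finset.sum_nonneg fun i _ => abs_nonneg _) (Ne.symm hc)
      set c := ∑ i, |d i| with hcdef
      have hmem : (∑ j, |∑ i, (d i / c) * G i j|) ∈ S := by
        refine ⟨fun i => d i / c, ?_, ?_, rfl⟩
        · simp only [abs_div, abs_of_pos hcpos, ← Finset.sum_div]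
          exact div_self hc
        · simp only [← Finset.sum_div, hd0, zero_div]
      have hle : (∑ j, |∑ i, (d i / c) * G i j|) ≤ tauOneSup G := le_csSup hbdd hmem
      have heq : ∑ j, |∑ i, d i * G i j| = c * ∑ j, |∑ i, (d i / c) * G i j| := by
        rw [Finset.mul_sum]
        refine Finset.sum_congr rfl fun j _ => ?_
        rw [← abs_of_pos hcpos, ← abs_mul, Finset.mul_sum, abs_of_pos hcpos]
        congr 1
        refine Finset.sum_congr rfl fun i _ => ?_
        field_simp
      rw [heq, mul_comm]
      exact mul_le_mul_of_nonneg_right hle hcpos.le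
  set K := ⨆ i : Fin n, ∑ j, |R i j| with hK
  have hKb : ∀ i, (∑ j, |R i j|) ≤ K := by
    intro i; rw [hK]
    exact le_ciSup (f := fun i => ∑ j, |R i j|)
      (Set.Finite.bddAbove (Set.finite_range _)) i
  have hE : ∑ j, |e j| ≤ K := by
    calc ∑ j, |e j| ≤ ∑ j, ∑ i, sbar i * |R i j| := by
          refine Finset.sum_le_sum fun j _ => ?_
          calc |e j| ≤ ∑ i, |sbar i * R i j| := Finset.abs_sum_le_sum_abs _ _
            _ = ∑ i, sbar i * |R i j| := Finset.sum_congr rfl fun i _ => by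
                rw [abs_mul, abs_of_pos (hsbar0 i)]
      _ = ∑ i, sbar i * ∑ j, |R i j| := by
          rw [Finset.sum_comm]
          exact Finset.sum_congr rfl fun i _ => by rw [← Finset.mul_sum]
      _ ≤ ∑ i, sbar i * K := Finset.sum_le_sum fun i _ =>
          mul_le_mul_of_nonneg_left (hKb i) (hsbar0 i).le
      _ = K := by rw [← Finset.sum_mul, hsbar1, one_mul]
  have main : ∑ j, |d j| ≤ tauOneSup G * ∑ j, |d j| + K := by
    calc ∑ j, |d j| ≤ ∑ j, (|∑ i, d i * G i j| + |e j|) :=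
          Finset.sum_le_sum fun j _ => by rw [hid j]; exact abs_add_le _ _
      _ = (∑ j, |∑ i, d i * G i j|) + ∑ j, |e j| := Finset.sum_add_distrib
      _ ≤ tauOneSup G * ∑ j, |d j| + K := add_le_add hB hE
  have h1τ : 0 < 1 - tauOneSup G := by linarith
  rw [le_div_iff₀ h1τ]
  nlinarith [main]
end

section
/- For the undirected cycle graph C_n, the nonlocal PageRank transition matrix P_α (built with the shortest-path distance and any positive nonincreasing f_α) is doubly stochastic, and consequently the uniform vector (1/n)·1 is the stationary distribution of G_α = c·P_α + ((1−c)/n)·1 1^T for every α > 0 and every c ∈ (0,1]. -/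
open Finset

/-- Shortest-path distance on the undirected cycle `C_n`: `δ(i,j) = min(|i−j|, n−|i−j|)`,
expressed via cyclic subtraction on `Fin n`. -/
def cycleDist {n : ℕ} [NeZero n] (i j : Fin n) : ℝ :=
  min (((j - i : Fin n) : ℕ) : ℝ) (((i - j : Fin n) : ℕ) : ℝ)

lemma cycleDist_symm {n : ℕ} [NeZero n] (i j : Fin n) :
    cycleDist i j = cycleDist j i := by
  unfold cycleDist; exact min_comm _ _

lemma cycleDist_nonneg {n : ℕ} [NeZero n] (i j : Fin n) :
    0 ≤ cycleDist i j := by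
  unfold cycleDist; exact le_min (by positivity) (by positivity)

open Fin.CommRing in
lemma cycleDist_shift {n : ℕ} [NeZero n] (i j d : Fin n) :
    cycleDist (i + d) (j + d) = cycleDist i j := by
  unfold cycleDist
  have h1 : (j + d) - (i + d) = j - i := by ring
  have h2 : (i + d) - (j + d) = i - j := by ring
  rw [h1, h2]

open Fin.CommRing in
lemma S_const {n : ℕ} [NeZero n] (f : ℝ → ℝ) (i j : Fin n) :
    ∑ k ∈ Finset.univ.erase i, f (cycleDist i k)
      = ∑ k ∈ Finset.univ.erase j, f (cycleDist j k) := by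
  apply Finset.sum_bij' (fun k _ => k + (j - i)) (fun k _ => k - (j - i))
  · intro a ha
    simp only [mem_erase, mem_univ, and_true] at ha ⊢
    intro h; apply ha; linear_combination h
  · intro a ha
    simp only [mem_erase, mem_univ, and_true] at ha ⊢
    intro h; apply ha; linear_combination h
  · intro a _; ring
  · intro a _; ring
  · intro a _
    congr 1
    have h1 : a + (j - i) - j = a - i := by ring
    have h2 : j - (a + (j - i)) = i - a := by ring
    unfold cycleDist
    rw [h1, h2]

/-- For the undirected cycle `C_n`, the nonlocal transition matrix `P_α`
(built from the shortest-path distance and a positive nonincreasing `f`) is doubly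
stochastic, and consequently the uniform vector `(1/n)·1` is the stationary distribution of
`G_α = c·P_α + ((1−c)/n)·11ᵀ` for every `c ∈ (0,1]`. -/
theorem cycle_nonlocal_pagerank_uniform
    {n : ℕ} [NeZero n] (hn : 3 ≤ n)
    (f : ℝ → ℝ)
    (hfpos : ∀ x : ℝ, 0 ≤ x → 0 < f x)
    (hfanti : ∀ x y : ℝ, 0 ≤ x → x ≤ y → f y ≤ f x)
    (Pa : Matrix (Fin n) (Fin n) ℝ)
    (hPa : ∀ i j, Pa i j =
      if j = i then 0
      else f (cycleDist i j) / ∑ k ∈ Finset.univ.erase i, f (cycleDist i k))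
    (c : ℝ) (hc : c ∈ Set.Ioc (0 : ℝ) 1)
    (G : Matrix (Fin n) (Fin n) ℝ)
    (hG : G = c • Pa + ((1 - c) / n) • (Matrix.of fun _ _ => (1 : ℝ))) :
    (∀ i, ∑ j, Pa i j = 1) ∧ (∀ j, ∑ i, Pa i j = 1) ∧
      (∀ j, ∑ i, (1 / (n : ℝ)) * G i j = 1 / (n : ℝ)) := by
  set S : Fin n → ℝ := fun i => ∑ k ∈ Finset.univ.erase i, f (cycleDist i k) with hS
  have hn1 : (1 : ℕ) < n := by omega
  have hne : ∀ i : Fin n, (Finset.univ.erase i).Nonempty := by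
    intro i
    refine ⟨i + 1, ?_⟩
    simp only [mem_erase, mem_univ, and_true]
    intro h
    have : (1 : Fin n) = 0 := by
      have := add_right_cancel (a := (1 : Fin n)) (b := i) (c := 0)
      apply this; rw [add_comm]; simpa using h
    have := Fin.one_eq_zero_iff.mp this
    omega
  have hSpos : ∀ i, 0 < S i := by
    intro i
    apply Finset.sum_pos
    · intro k _; exact hfpos _ (cycleDist_nonneg _ _)
    · exact hne i
  have hrow : ∀ i, ∑ j, Pa i j = 1 := by
    intro i
    rw [← Finset.sum_erase_add _ _ (mem_univ i)]
    have h0 : Pa i i = 0 := by rw [hPa]; simp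
    rw [h0, add_zero]
    have : ∀ j ∈ Finset.univ.erase i, Pa i j = f (cycleDist i j) / S i := by
      intro j hj
      rw [hPa]; rw [mem_erase] at hj
      rw [if_neg hj.1]
    rw [Finset.sum_congr rfl this, ← Finset.sum_div]
    exact div_self (hSpos i).ne'
  have hcol : ∀ j, ∑ i, Pa i j = 1 := by
    intro j
    rw [← Finset.sum_erase_add _ _ (mem_univ j)]
    have h0 : Pa j j = 0 := by rw [hPa]; simp
    rw [h0, add_zero]
    have : ∀ i ∈ Finset.univ.erase j, Pa i j = f (cycleDist j i) / S j := by
      intro i hi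
      rw [hPa]; rw [mem_erase] at hi
      rw [if_neg (by exact fun h => hi.1 h.symm)]
      rw [cycleDist_symm, hS]
      simp only
      rw [S_const f i j]
    rw [Finset.sum_congr rfl this, ← Finset.sum_div]
    exact div_self (hSpos j).ne'
  refine ⟨hrow, hcol, ?_⟩
  intro j
  have hnR : (n : ℝ) ≠ 0 := Nat.cast_ne_zero.mpr (NeZero.ne n)
  rw [← Finset.mul_sum]
  have : ∑ i, G i j = 1 := by
    subst hG
    simp only [Matrix.add_apply, Matrix.smul_apply, Matrix.of_apply, smul_eq_mul, mul_one]
    rw [Finset.sum_add_distrib, ← Finset.mul_sum, hcol j, mul_one]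
    rw [Finset.sum_const, Finset.card_univ, Fintype.card_fin, nsmul_eq_mul]
    field_simp
    ring
  rw [this, mul_one]
end
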